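/- Let Ω_T ⊂ ℝ^{n+1} be a space-time cylinder, 0 < ρ ≤ γ < 1 and 0 < r ≤ s < q < ∞. Then ||f||_{PJN^+_{q,γ,r}(Ω_T)} ≤ c₀ ((1-ρ)/(1-γ))^{1/s - 1/q} ||f||_{PJN^+_{q,ρ,s}(Ω_T)}, where c₀ = max{1, 2^{1/r - 1}} max{1, 2^{1 - 1/s}}. -/

import Mathlib

open MeasureTheory ENNReal Set Filter

noncomputable section

/-- A parabolic rectangle in `ℝⁿ × ℝ`, determined by its center `(x, t)` and
edge length `L > 0`. -/
structure ParRect (n : ℕ) where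
  x : Fin n → ℝ
  t : ℝ
  L : ℝ
  hL : 0 < L

variable {n : ℕ}

/-- The spatial cube `Q(x, L)`. -/
def ParRect.base (R : ParRect n) : Set (Fin n → ℝ) :=
  {y | ∀ i, |y i - R.x i| ≤ R.L}

/-- The parabolic rectangle `R = Q(x,L) × (t - L^p, t + L^p)`. -/
def ParRect.rect (p : ℝ) (R : ParRect n) : Set ((Fin n → ℝ) × ℝ) :=
  R.base ×ˢ Ioo (R.t - R.L ^ p) (R.t + R.L ^ p)

/-- The upper part `R⁺(γ) = Q(x,L) × (t + γL^p, t + L^p)`. -/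
def ParRect.upper (p γ : ℝ) (R : ParRect n) : Set ((Fin n → ℝ) × ℝ) :=
  R.base ×ˢ Ioo (R.t + γ * R.L ^ p) (R.t + R.L ^ p)

/-- The lower part `R⁻(γ) = Q(x,L) × (t - L^p, t - γL^p)`. -/
def ParRect.lower (p γ : ℝ) (R : ParRect n) : Set ((Fin n → ℝ) × ℝ) :=
  R.base ×ˢ Ioo (R.t - R.L ^ p) (R.t - γ * R.L ^ p)

/-- Positive part of a real number. -/
def posPart' (x : ℝ) : ℝ := max x 0

/-- The parabolic `r`-oscillation
`inf_c ( ⨍_{R⁺(γ)} (f-c)₊^r + ⨍_{R⁻(γ)} (f-c)₋^r )` of `f` on `R`. -/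
def osc (p γ r : ℝ) (f : (Fin n → ℝ) × ℝ → ℝ) (R : ParRect n) : ℝ≥0∞ :=
  ⨅ c : ℝ,
    ((∫⁻ z in R.upper p γ, ENNReal.ofReal (posPart' (f z - c) ^ r)) / volume (R.upper p γ) +
     (∫⁻ z in R.lower p γ, ENNReal.ofReal (posPart' (c - f z) ^ r)) / volume (R.lower p γ))

/-- The `q`-th power of the parabolic John–Nirenberg norm `‖f‖_{PJN⁺_{q,γ,r}(Ω)}^q`:
the supremum over countable pairwise disjoint collections of parabolic subrectangles of `Ω` of
`Σᵢ |Rᵢ⁺(γ)| · osc(f, Rᵢ)^{q/r}`. -/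
def pjnQ (p q γ r : ℝ) (f : (Fin n → ℝ) × ℝ → ℝ) (Ω : Set ((Fin n → ℝ) × ℝ)) : ℝ≥0∞ :=
  ⨆ (Rs : ℕ → ParRect n) (_ : ∀ i, (Rs i).rect p ⊆ Ω)
    (_ : Pairwise fun i j => Disjoint ((Rs i).rect p) ((Rs j).rect p)),
    ∑' i, volume ((Rs i).upper p γ) * osc p γ r f (Rs i) ^ (q / r)

/-- The parabolic John–Nirenberg norm `‖f‖_{PJN⁺_{q,γ,r}(Ω)}`. -/
def pjn (p q γ r : ℝ) (f : (Fin n → ℝ) × ℝ → ℝ) (Ω : Set ((Fin n → ℝ) × ℝ)) : ℝ≥0∞ :=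
  pjnQ p q γ r f Ω ^ (1 / q)

/-- The parabolic BMO norm `‖f‖_{PBMO⁺_{γ,r}(Ω)}`. -/
def pbmo (p γ r : ℝ) (f : (Fin n → ℝ) × ℝ → ℝ) (Ω : Set ((Fin n → ℝ) × ℝ)) : ℝ≥0∞ :=
  ⨆ (R : ParRect n) (_ : R.rect p ⊆ Ω), osc p γ r f R ^ (1 / r)


lemma posPart'_nonneg (x : ℝ) : 0 ≤ posPart' x := le_max_right x 0

lemma avg_rpow_le {α : Type*} [MeasurableSpace α] (μ : Measure α) {G : α → ℝ≥0∞}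
    (hG : AEMeasurable G μ) {r s : ℝ} (hr : 0 < r) (hrs : r ≤ s)
    (hμ0 : μ Set.univ ≠ 0) (hμt : μ Set.univ ≠ ∞) :
    (∫⁻ z, G z ^ r ∂μ) / μ Set.univ ≤ ((∫⁻ z, G z ^ s ∂μ) / μ Set.univ) ^ (r / s) := by
  have hs : 0 < s := hr.trans_le hrs
  rcases eq_or_lt_of_le hrs with h | h
  · subst h
    rw [div_self hr.ne', ENNReal.rpow_one]
  · have he : 1 < s / r := (one_lt_div hr).2 h
    have hpq : (s / r).HolderConjugate _ := Real.HolderConjugate.conjExponent he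
    have hGr : AEMeasurable (fun z => G z ^ r) μ :=
      (ENNReal.continuous_rpow_const.measurable.comp_aemeasurable hG)
    have H := ENNReal.lintegral_mul_le_Lp_mul_Lq μ hpq hGr
      (aemeasurable_const (b := (1 : ℝ≥0∞)))
    simp only [Pi.mul_apply, mul_one, ENNReal.one_rpow, lintegral_const, one_mul] at H
    have h1 : ∀ z, (G z ^ r) ^ (s / r) = G z ^ s := fun z => by
      rw [← ENNReal.rpow_mul]
      congr 1
      field_simp
    simp only [h1] at H
    have hinv : 1 / (s / r).conjExponent = 1 - r / s := by
      have h2 := hpq.inv_add_inv_eq_one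
      have : (s / r)⁻¹ = r / s := by field_simp
      rw [one_div]
      linarith [h2, this ▸ h2]
    rw [one_div_div] at H
    rw [hinv] at H
    calc (∫⁻ z, G z ^ r ∂μ) / μ Set.univ
        ≤ ((∫⁻ z, G z ^ s ∂μ) ^ (r / s) * μ Set.univ ^ (1 - r / s)) / μ Set.univ :=
          ENNReal.div_le_div_right H _
      _ = ((∫⁻ z, G z ^ s ∂μ) / μ Set.univ) ^ (r / s) := by
          rw [ENNReal.div_rpow_of_nonneg _ _ (by positivity), mul_div_assoc]
          have hM : μ Set.univ ^ (1 - r / s) / μ Set.univ = (μ Set.univ ^ (r / s))⁻¹ := by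
            nth_rewrite 2 [← ENNReal.rpow_one (μ Set.univ)]
            rw [← ENNReal.rpow_sub _ _ hμ0 hμt, ← ENNReal.rpow_neg]
            congr 1
            ring
          rw [hM, ← div_eq_mul_inv]

lemma rpow_add_rpow_le_two_rpow (a b : ℝ≥0∞) {t : ℝ} (ht0 : 0 < t) (ht1 : t ≤ 1) :
    a ^ t + b ^ t ≤ (2 : ℝ≥0∞) ^ (1 - t) * (a + b) ^ t := by
  have hp : 1 ≤ 1 / t := by rw [le_div_iff₀ ht0]; linarith
  have h := ENNReal.rpow_add_le_mul_rpow_add_rpow (a ^ t) (b ^ t) hp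
  have e : ∀ x : ℝ≥0∞, (x ^ t) ^ (1 / t) = x := fun x => by
    rw [← ENNReal.rpow_mul, mul_one_div, div_self ht0.ne', ENNReal.rpow_one]
  rw [e, e] at h
  have h3 := ENNReal.rpow_le_rpow h ht0.le
  rw [← ENNReal.rpow_mul, one_div, inv_mul_cancel₀ ht0.ne', ENNReal.rpow_one,
    ENNReal.mul_rpow_of_nonneg _ _ ht0.le, ← ENNReal.rpow_mul] at h3
  have he : (t⁻¹ - 1) * t = 1 - t := by field_simp
  rwa [he] at h3

lemma ParRect.base_eq (R : ParRect n) :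
    R.base = Set.pi Set.univ (fun i => Icc (R.x i - R.L) (R.x i + R.L)) := by
  ext y
  simp only [ParRect.base, Set.mem_setOf_eq, Set.mem_pi, Set.mem_univ, forall_true_left,
    Set.mem_Icc, abs_le]
  constructor <;> intro h i <;> obtain ⟨h1, h2⟩ := h i <;> constructor <;> linarith

lemma ParRect.volume_base (R : ParRect n) :
    volume R.base = ENNReal.ofReal (2 * R.L) ^ n := by
  rw [R.base_eq, volume_pi_pi]
  have h : ∀ i : Fin n, volume (Icc (R.x i - R.L) (R.x i + R.L)) = ENNReal.ofReal (2 * R.L) := by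
    intro i; rw [Real.volume_Icc]; congr 1; ring
  simp [h, Finset.prod_const]

lemma ParRect.volume_base_ne_zero (R : ParRect n) : volume R.base ≠ 0 := by
  rw [R.volume_base]
  exact pow_ne_zero n (by simp only [ne_eq, ENNReal.ofReal_eq_zero, not_le]; linarith [R.hL])

lemma ParRect.volume_base_ne_top (R : ParRect n) : volume R.base ≠ ∞ :=
  R.volume_base ▸ ENNReal.pow_ne_top ENNReal.ofReal_ne_top

lemma ParRect.volume_upper (R : ParRect n) (p l : ℝ) :
    volume (R.upper p l) = volume R.base * ENNReal.ofReal ((1 - l) * R.L ^ p) := by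
  rw [ParRect.upper, Measure.volume_eq_prod, Measure.prod_prod, Real.volume_Ioo]
  congr 2
  ring

lemma ParRect.volume_lower (R : ParRect n) (p l : ℝ) :
    volume (R.lower p l) = volume R.base * ENNReal.ofReal ((1 - l) * R.L ^ p) := by
  rw [ParRect.lower, Measure.volume_eq_prod, Measure.prod_prod, Real.volume_Ioo]
  congr 2
  ring

lemma ParRect.volume_upper_ne_zero (R : ParRect n) (p : ℝ) {l : ℝ} (hl : l < 1) :
    volume (R.upper p l) ≠ 0 := by
  rw [R.volume_upper]
  have h1 : (0 : ℝ) < (1 - l) * R.L ^ p :=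
    mul_pos (by linarith) (Real.rpow_pos_of_pos R.hL p)
  exact mul_ne_zero R.volume_base_ne_zero (ENNReal.ofReal_pos.2 h1).ne'

lemma ParRect.volume_upper_ne_top (R : ParRect n) (p l : ℝ) :
    volume (R.upper p l) ≠ ∞ := by
  rw [R.volume_upper]
  exact ENNReal.mul_ne_top R.volume_base_ne_top ENNReal.ofReal_ne_top

lemma ParRect.volume_lower_ne_zero (R : ParRect n) (p : ℝ) {l : ℝ} (hl : l < 1) :
    volume (R.lower p l) ≠ 0 := by
  rw [R.volume_lower, ← R.volume_upper]
  exact R.volume_upper_ne_zero p hl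

lemma ParRect.volume_lower_ne_top (R : ParRect n) (p l : ℝ) :
    volume (R.lower p l) ≠ ∞ := by
  rw [R.volume_lower, ← R.volume_upper]
  exact R.volume_upper_ne_top p l

lemma ParRect.volume_upper_ratio (R : ParRect n) (p : ℝ) {ρ γ : ℝ} (hρ1 : ρ < 1) (hγ1 : γ < 1) :
    volume (R.upper p ρ) = ENNReal.ofReal ((1 - ρ) / (1 - γ)) * volume (R.upper p γ) := by
  have h1 : (0 : ℝ) < 1 - γ := by linarith
  have h2 : ENNReal.ofReal ((1 - ρ) * R.L ^ p) =
      ENNReal.ofReal ((1 - ρ) / (1 - γ)) * ENNReal.ofReal ((1 - γ) * R.L ^ p) := by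
    rw [← ENNReal.ofReal_mul (div_nonneg (by linarith) h1.le)]
    congr 1
    field_simp
  rw [R.volume_upper, R.volume_upper, h2]
  ring

lemma ParRect.volume_lower_ratio (R : ParRect n) (p : ℝ) {ρ γ : ℝ} (hρ1 : ρ < 1) (hγ1 : γ < 1) :
    volume (R.lower p ρ) = ENNReal.ofReal ((1 - ρ) / (1 - γ)) * volume (R.lower p γ) := by
  rw [R.volume_lower, ← R.volume_upper, R.volume_lower, ← R.volume_upper]
  exact R.volume_upper_ratio p hρ1 hγ1

lemma ParRect.upper_subset (R : ParRect n) (p : ℝ) {ρ γ : ℝ} (hργ : ρ ≤ γ) :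
    R.upper p γ ⊆ R.upper p ρ := by
  refine Set.prod_mono Subset.rfl (Ioo_subset_Ioo ?_ le_rfl)
  have := Real.rpow_nonneg R.hL.le p
  nlinarith

lemma ParRect.lower_subset (R : ParRect n) (p : ℝ) {ρ γ : ℝ} (hργ : ρ ≤ γ) :
    R.lower p γ ⊆ R.lower p ρ := by
  refine Set.prod_mono Subset.rfl (Ioo_subset_Ioo le_rfl ?_)
  have := Real.rpow_nonneg R.hL.le p
  nlinarith

lemma osc_le (p : ℝ) {γ ρ r s : ℝ} (hρ1 : ρ < 1) (hργ : ρ ≤ γ) (hγ1 : γ < 1)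
    (hr : 0 < r) (hrs : r ≤ s)
    (f : (Fin n → ℝ) × ℝ → ℝ) (hf : Measurable f) (R : ParRect n) :
    osc p γ r f R ≤ (2 : ℝ≥0∞) ^ (1 - r / s) * ENNReal.ofReal ((1 - ρ) / (1 - γ)) ^ (r / s) *
      osc p ρ s f R ^ (r / s) := by
  have hs : 0 < s := hr.trans_le hrs
  have ht0 : 0 < r / s := div_pos hr hs
  have ht1 : r / s ≤ 1 := (div_le_one hs).2 hrs
  have hK1 : (1 : ℝ) ≤ (1 - ρ) / (1 - γ) := (le_div_iff₀ (by linarith)).2 (by linarith)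
  set kE := ENNReal.ofReal ((1 - ρ) / (1 - γ)) with hkE
  have hk0 : kE ≠ 0 := (lt_of_lt_of_le zero_lt_one (ENNReal.one_le_ofReal.2 hK1)).ne'
  have hkt : kE ≠ ∞ := ENNReal.ofReal_ne_top
  -- general Jensen on a set
  have jensen : ∀ (U : Set ((Fin n → ℝ) × ℝ)), volume U ≠ 0 → volume U ≠ ∞ →
      ∀ (G : (Fin n → ℝ) × ℝ → ℝ≥0∞), Measurable G →
      (∫⁻ z in U, G z ^ r) / volume U ≤ ((∫⁻ z in U, G z ^ s) / volume U) ^ (r / s) := by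
    intro U hU0 hUt G hG
    have h := avg_rpow_le (volume.restrict U) hG.aemeasurable hr hrs
      (by rwa [Measure.restrict_apply_univ]) (by rwa [Measure.restrict_apply_univ])
    rwa [Measure.restrict_apply_univ] at h
  -- general monotonicity step
  have mono : ∀ (A B : Set ((Fin n → ℝ) × ℝ)), A ⊆ B → volume B = kE * volume A →
      ∀ (F : (Fin n → ℝ) × ℝ → ℝ≥0∞),
      (∫⁻ z in A, F z) / volume A ≤ kE * ((∫⁻ z in B, F z) / volume B) := by
    intro A B hAB hB F
    calc (∫⁻ z in A, F z) / volume A ≤ (∫⁻ z in B, F z) / volume A :=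
          ENNReal.div_le_div_right (lintegral_mono_set hAB) _
      _ = kE * ((∫⁻ z in B, F z) / volume B) := by
          rw [hB, ← mul_div_assoc, ENNReal.mul_div_mul_left _ _ hk0 hkt]
  -- the per-constant bound
  have main : ∀ c : ℝ,
      (∫⁻ z in R.upper p γ, ENNReal.ofReal (posPart' (f z - c) ^ r)) / volume (R.upper p γ) +
      (∫⁻ z in R.lower p γ, ENNReal.ofReal (posPart' (c - f z) ^ r)) / volume (R.lower p γ)
      ≤ (2 : ℝ≥0∞) ^ (1 - r / s) * kE ^ (r / s) *
        (((∫⁻ z in R.upper p ρ, ENNReal.ofReal (posPart' (f z - c) ^ s)) / volume (R.upper p ρ) +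
          (∫⁻ z in R.lower p ρ, ENNReal.ofReal (posPart' (c - f z) ^ s)) / volume (R.lower p ρ))
          ^ (r / s)) := by
    intro c
    set G : (Fin n → ℝ) × ℝ → ℝ≥0∞ := fun z => ENNReal.ofReal (posPart' (f z - c)) with hG
    set G' : (Fin n → ℝ) × ℝ → ℝ≥0∞ := fun z => ENNReal.ofReal (posPart' (c - f z)) with hG'
    have hGm : Measurable G := ((hf.sub measurable_const).max measurable_const).ennreal_ofReal
    have hGm' : Measurable G' := ((measurable_const.sub hf).max measurable_const).ennreal_ofReal
    have eG : ∀ (U : Set ((Fin n → ℝ) × ℝ)) (u : ℝ), 0 ≤ u →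
        (∫⁻ z in U, ENNReal.ofReal (posPart' (f z - c) ^ u)) = ∫⁻ z in U, G z ^ u := by
      intro U u hu
      refine lintegral_congr fun z => ?_
      rw [hG, ENNReal.ofReal_rpow_of_nonneg (posPart'_nonneg _) hu]
    have eG' : ∀ (U : Set ((Fin n → ℝ) × ℝ)) (u : ℝ), 0 ≤ u →
        (∫⁻ z in U, ENNReal.ofReal (posPart' (c - f z) ^ u)) = ∫⁻ z in U, G' z ^ u := by
      intro U u hu
      refine lintegral_congr fun z => ?_
      rw [hG', ENNReal.ofReal_rpow_of_nonneg (posPart'_nonneg _) hu]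
    rw [eG _ r hr.le, eG' _ r hr.le, eG _ s hs.le, eG' _ s hs.le]
    have hA := jensen (R.upper p γ) (R.volume_upper_ne_zero p hγ1) (R.volume_upper_ne_top p γ) G hGm
    have hB := jensen (R.lower p γ) (R.volume_lower_ne_zero p hγ1) (R.volume_lower_ne_top p γ) G' hGm'
    have hA2 := mono (R.upper p γ) (R.upper p ρ) (R.upper_subset p hργ)
      (R.volume_upper_ratio p hρ1 hγ1) (fun z => G z ^ s)
    have hB2 := mono (R.lower p γ) (R.lower p ρ) (R.lower_subset p hργ)
      (R.volume_lower_ratio p hρ1 hγ1) (fun z => G' z ^ s)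
    calc (∫⁻ z in R.upper p γ, G z ^ r) / volume (R.upper p γ) +
          (∫⁻ z in R.lower p γ, G' z ^ r) / volume (R.lower p γ)
        ≤ ((∫⁻ z in R.upper p γ, G z ^ s) / volume (R.upper p γ)) ^ (r / s) +
          ((∫⁻ z in R.lower p γ, G' z ^ s) / volume (R.lower p γ)) ^ (r / s) :=
          add_le_add hA hB
      _ ≤ (2 : ℝ≥0∞) ^ (1 - r / s) *
          ((∫⁻ z in R.upper p γ, G z ^ s) / volume (R.upper p γ) +
           (∫⁻ z in R.lower p γ, G' z ^ s) / volume (R.lower p γ)) ^ (r / s) :=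
          rpow_add_rpow_le_two_rpow _ _ ht0 ht1
      _ ≤ (2 : ℝ≥0∞) ^ (1 - r / s) *
          (kE * ((∫⁻ z in R.upper p ρ, G z ^ s) / volume (R.upper p ρ) +
           (∫⁻ z in R.lower p ρ, G' z ^ s) / volume (R.lower p ρ))) ^ (r / s) := by
          refine mul_le_mul_right (ENNReal.rpow_le_rpow ?_ ht0.le) _
          refine le_trans (add_le_add hA2 hB2) (le_of_eq ?_)
          rw [mul_add]
      _ = (2 : ℝ≥0∞) ^ (1 - r / s) * kE ^ (r / s) *
          (((∫⁻ z in R.upper p ρ, G z ^ s) / volume (R.upper p ρ) +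
            (∫⁻ z in R.lower p ρ, G' z ^ s) / volume (R.lower p ρ)) ^ (r / s)) := by
          rw [ENNReal.mul_rpow_of_nonneg _ _ ht0.le, mul_assoc]
  -- conclude by taking the infimum
  have hD0 : ((2 : ℝ≥0∞) ^ (1 - r / s) * kE ^ (r / s)) ≠ 0 :=
    mul_ne_zero (ENNReal.rpow_pos (by norm_num) (by norm_num)).ne'
      (ENNReal.rpow_pos (pos_iff_ne_zero.mpr hk0) hkt).ne'
  have hDt : ((2 : ℝ≥0∞) ^ (1 - r / s) * kE ^ (r / s)) ≠ ∞ :=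
    ENNReal.mul_ne_top (ENNReal.rpow_ne_top_of_nonneg (by linarith) (by norm_num))
      (ENNReal.rpow_ne_top_of_nonneg ht0.le hkt)
  rw [osc, osc]
  refine le_trans (iInf_mono main) ?_
  rw [← ENNReal.mul_iInf_of_ne hD0 hDt]
  refine mul_le_mul_right (le_of_eq ?_) _
  exact ((ENNReal.orderIsoRpow (r / s) ht0).map_iInf _).symm

lemma key (p : ℝ) {q γ ρ r s : ℝ} (hρ0 : 0 < ρ) (hργ : ρ ≤ γ) (hγ1 : γ < 1)
    (hr : 0 < r) (hrs : r ≤ s) (hsq : s < q)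
    (f : (Fin n → ℝ) × ℝ → ℝ) (hf : Measurable f) (R : ParRect n) :
    volume (R.upper p γ) * osc p γ r f R ^ (q / r) ≤
      ENNReal.ofReal (max 1 ((2 : ℝ) ^ (1 / r - 1)) * max 1 ((2 : ℝ) ^ (1 - 1 / s)) *
          ((1 - ρ) / (1 - γ)) ^ (1 / s - 1 / q)) ^ q *
        (volume (R.upper p ρ) * osc p ρ s f R ^ (q / s)) := by
  have hs : 0 < s := hr.trans_le hrs
  have hq : 0 < q := hs.trans hsq
  have hρ1 : ρ < 1 := lt_of_le_of_lt hργ hγ1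
  have hK0 : (0 : ℝ) < (1 - ρ) / (1 - γ) := div_pos (by linarith) (by linarith)
  have hK1 : (1 : ℝ) ≤ (1 - ρ) / (1 - γ) := (le_div_iff₀ (by linarith)).2 (by linarith)
  set K : ℝ := (1 - ρ) / (1 - γ) with hKdef
  set kE := ENNReal.ofReal K with hkE
  have hk0 : kE ≠ 0 := (lt_of_lt_of_le zero_lt_one (ENNReal.one_le_ofReal.2 hK1)).ne'
  have hkt : kE ≠ ∞ := ENNReal.ofReal_ne_top
  have hqr : (0 : ℝ) ≤ q / r := by positivity
  have h1 := osc_le p hρ1 hργ hγ1 hr hrs f hf R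
  have h2 := ENNReal.rpow_le_rpow h1 hqr
  rw [ENNReal.mul_rpow_of_nonneg _ _ hqr, ENNReal.mul_rpow_of_nonneg _ _ hqr,
    ← ENNReal.rpow_mul, ← ENNReal.rpow_mul, ← ENNReal.rpow_mul] at h2
  have e1 : (1 - r / s) * (q / r) = q / r - q / s := by field_simp
  have e2 : r / s * (q / r) = q / s := by
    rw [div_mul_div_comm, mul_comm s r, mul_div_mul_left _ _ hr.ne']
  rw [e1, e2] at h2
  -- the constant inequality
  set c1 : ℝ := max 1 ((2 : ℝ) ^ (1 / r - 1)) with hc1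
  set c2 : ℝ := max 1 ((2 : ℝ) ^ (1 - 1 / s)) with hc2
  have hc10 : (0 : ℝ) ≤ c1 := le_trans zero_le_one (le_max_left _ _)
  have hc20 : (0 : ℝ) ≤ c2 := le_trans zero_le_one (le_max_left _ _)
  have hcore : (2 : ℝ≥0∞) ^ (q / r - q / s) * kE ^ (q / s - 1) ≤
      ENNReal.ofReal (c1 * c2 * K ^ (1 / s - 1 / q)) ^ q := by
    have hsplit : ENNReal.ofReal (c1 * c2 * K ^ (1 / s - 1 / q)) ^ q =
        ENNReal.ofReal ((c1 * c2) ^ q) * ENNReal.ofReal (K ^ (q / s - 1)) := by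
      rw [ENNReal.ofReal_mul (mul_nonneg hc10 hc20),
        ENNReal.mul_rpow_of_nonneg _ _ hq.le,
        ENNReal.ofReal_rpow_of_nonneg (mul_nonneg hc10 hc20) hq.le,
        ENNReal.ofReal_rpow_of_nonneg (Real.rpow_nonneg hK0.le _) hq.le,
        ← Real.rpow_mul hK0.le]
      have eexp : (1 / s - 1 / q) * q = q / s - 1 := by
        rw [sub_mul, one_div_mul_eq_div, one_div, inv_mul_cancel₀ hq.ne']
      rw [eexp]
    have hkeq : kE ^ (q / s - 1) = ENNReal.ofReal (K ^ (q / s - 1)) := by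
      rw [hkE, ENNReal.ofReal_rpow_of_nonneg hK0.le]
      have : (1 : ℝ) ≤ q / s := (le_div_iff₀ hs).2 (by linarith)
      linarith
    have h2le : (2 : ℝ≥0∞) ^ (q / r - q / s) ≤ ENNReal.ofReal ((c1 * c2) ^ q) := by
      have h2e : (2 : ℝ≥0∞) = ENNReal.ofReal 2 := by norm_num
      have hexp : (0 : ℝ) ≤ q / r - q / s := by
        have : q / s ≤ q / r := div_le_div_of_nonneg_left hq.le hr hrs
        linarith
      rw [h2e, ENNReal.ofReal_rpow_of_nonneg (by norm_num) hexp]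
      apply ENNReal.ofReal_le_ofReal
      have hval : (2 : ℝ) ^ (q / r - q / s) = ((2 : ℝ) ^ (1 / r - 1) * (2 : ℝ) ^ (1 - 1 / s)) ^ q := by
        rw [← Real.rpow_add two_pos, ← Real.rpow_mul (by norm_num)]
        congr 1
        field_simp
        ring
      rw [hval]
      apply Real.rpow_le_rpow (by positivity) _ hq.le
      exact mul_le_mul (le_max_right _ _) (le_max_right _ _) (Real.rpow_pos_of_pos two_pos _).le hc10
    rw [hsplit, hkeq]
    exact mul_le_mul' h2le le_rfl
  -- assemble
  have hVr : volume (R.upper p ρ) = kE * volume (R.upper p γ) := R.volume_upper_ratio p hρ1 hγ1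
  have hk' : kE ^ (q / s) = kE ^ (q / s - 1) * kE := by
    nth_rewrite 3 [← ENNReal.rpow_one kE]
    rw [← ENNReal.rpow_add _ _ hk0 hkt]
    congr 1
    ring
  calc volume (R.upper p γ) * osc p γ r f R ^ (q / r)
      ≤ volume (R.upper p γ) *
        ((2 : ℝ≥0∞) ^ (q / r - q / s) * kE ^ (q / s) * osc p ρ s f R ^ (q / s)) :=
        mul_le_mul_right h2 _
    _ = ((2 : ℝ≥0∞) ^ (q / r - q / s) * kE ^ (q / s - 1)) *
        ((kE * volume (R.upper p γ)) * osc p ρ s f R ^ (q / s)) := by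
        rw [hk']; ring
    _ ≤ ENNReal.ofReal (c1 * c2 * K ^ (1 / s - 1 / q)) ^ q *
        (volume (R.upper p ρ) * osc p ρ s f R ^ (q / s)) := by
        rw [hVr]
        exact mul_le_mul_left hcore _

/-- First inequality of Corollary 4.2:
`‖f‖_{PJN⁺_{q,γ,r}(Ω_T)} ≤ c₀ ((1-ρ)/(1-γ))^{1/s-1/q} ‖f‖_{PJN⁺_{q,ρ,s}(Ω_T)}`, where
`c₀ = max{1, 2^{1/r-1}} max{1, 2^{1-1/s}}`. -/
theorem pjn_lag_comparison_easy (n : ℕ) (p q γ ρ r s : ℝ) (hp : 1 < p)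
    (hρ0 : 0 < ρ) (hργ : ρ ≤ γ) (hγ1 : γ < 1)
    (hr : 0 < r) (hrs : r ≤ s) (hsq : s < q)
    (Ω : Set (Fin n → ℝ)) (T : ℝ) (hT : 0 < T)
    (f : (Fin n → ℝ) × ℝ → ℝ) (hf : Measurable f) :
    pjn p q γ r f (Ω ×ˢ Ioo (0 : ℝ) T) ≤
      ENNReal.ofReal (max 1 ((2 : ℝ) ^ (1 / r - 1)) * max 1 ((2 : ℝ) ^ (1 - 1 / s)) *
        ((1 - ρ) / (1 - γ)) ^ (1 / s - 1 / q)) *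
      pjn p q ρ s f (Ω ×ˢ Ioo (0 : ℝ) T) := by
  have hs : 0 < s := hr.trans_le hrs
  have hq : 0 < q := hs.trans hsq
  set C := ENNReal.ofReal (max 1 ((2 : ℝ) ^ (1 / r - 1)) * max 1 ((2 : ℝ) ^ (1 - 1 / s)) *
    ((1 - ρ) / (1 - γ)) ^ (1 / s - 1 / q)) with hC
  have hQ : pjnQ p q γ r f (Ω ×ˢ Ioo (0 : ℝ) T) ≤
      C ^ q * pjnQ p q ρ s f (Ω ×ˢ Ioo (0 : ℝ) T) := by
    rw [pjnQ]
    refine iSup_le fun Rs => iSup_le fun h1 => iSup_le fun h2 => ?_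
    calc ∑' i, volume ((Rs i).upper p γ) * osc p γ r f (Rs i) ^ (q / r)
        ≤ ∑' i, C ^ q * (volume ((Rs i).upper p ρ) * osc p ρ s f (Rs i) ^ (q / s)) :=
          ENNReal.tsum_le_tsum fun i => key p hρ0 hργ hγ1 hr hrs hsq f hf (Rs i)
      _ = C ^ q * ∑' i, volume ((Rs i).upper p ρ) * osc p ρ s f (Rs i) ^ (q / s) :=
          ENNReal.tsum_mul_left
      _ ≤ C ^ q * pjnQ p q ρ s f (Ω ×ˢ Ioo (0 : ℝ) T) := by
          refine mul_le_mul_right ?_ _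
          exact le_iSup_of_le Rs (le_iSup_of_le h1 (le_iSup_of_le h2 le_rfl))
  have h3 := ENNReal.rpow_le_rpow hQ (by positivity : (0 : ℝ) ≤ 1 / q)
  rw [ENNReal.mul_rpow_of_nonneg _ _ (by positivity : (0 : ℝ) ≤ 1 / q),
    ← ENNReal.rpow_mul, mul_one_div, div_self hq.ne', ENNReal.rpow_one] at h3
  exact h3


end
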